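/- (Brandt, the class number is an invariant of the algebra) Let a, b be nonzero rationals and A = ℍ[ℚ, a, b]. For any two maximal orders O and O′ of A, the set of equivalence classes of left O-ideals and the set of equivalence classes of left O′-ideals are in bijection; in particular all maximal orders of A have the same class number, so one may speak of the class number h of the algebra A. -/

import Mathlib

open scoped Quaternion

/-- An order in the quaternion algebra `ℍ[ℚ, a, b]`: a subring (hence containing `1`)
which is finitely generated as a ℤ-module and contains a ℚ-basis of the algebra
(i.e. spans it over ℚ). -/
def IsOrder {a b : ℚ} (O : Subring ℍ[ℚ, a, b]) : Prop :=
  (∃ s : Finset ℍ[ℚ, a, b],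
      (Submodule.span ℤ (s : Set ℍ[ℚ, a, b]) : Set ℍ[ℚ, a, b]) = (O : Set ℍ[ℚ, a, b])) ∧
    Submodule.span ℚ (O : Set ℍ[ℚ, a, b]) = ⊤

/-- A maximal order: an order maximal under inclusion. -/
def IsMaximalOrder {a b : ℚ} (O : Subring ℍ[ℚ, a, b]) : Prop :=
  IsOrder O ∧ ∀ O' : Subring ℍ[ℚ, a, b], IsOrder O' → O ≤ O' → O' = O

/-- Two orders are conjugate (of the same type) if `O' = γ⁻¹·O·γ` for some
invertible (equivalently, of nonzero reduced norm) `γ` in the algebra. -/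
def AreConjugate {a b : ℚ} (O O' : Subring ℍ[ℚ, a, b]) : Prop :=
  ∃ γ : ℍ[ℚ, a, b]ˣ,
    ∀ x, x ∈ O' ↔ ∃ y ∈ O, x = (↑γ⁻¹ : ℍ[ℚ, a, b]) * y * (↑γ : ℍ[ℚ, a, b])

/-- A left `O`-ideal: a ℤ-submodule of the algebra, finitely generated as a ℤ-module,
containing a ℚ-basis of the algebra, and stable under left multiplication by `O`. -/
def IsLeftIdeal {a b : ℚ} (O : Subring ℍ[ℚ, a, b]) (I : Submodule ℤ ℍ[ℚ, a, b]) : Prop :=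
  I.FG ∧ Submodule.span ℚ (I : Set ℍ[ℚ, a, b]) = ⊤ ∧ ∀ o ∈ O, ∀ x ∈ I, o * x ∈ I

/-- Equivalence of left ideals: `I = J·γ` for some nonzero `γ`. -/
def IdealEquiv {a b : ℚ} (I J : Submodule ℤ ℍ[ℚ, a, b]) : Prop :=
  ∃ γ : ℍ[ℚ, a, b], γ ≠ 0 ∧ (I : Set ℍ[ℚ, a, b]) = (fun y => y * γ) '' (J : Set ℍ[ℚ, a, b])

open Pointwise Submodule

namespace BrandtAux

variable {a b : ℚ}

/-- reduced norm -/
noncomputable def nrd (x : ℍ[ℚ,a,b]) : ℚ := (x * star x).re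

/-- reduced trace -/
def trd (x : ℍ[ℚ,a,b]) : ℚ := 2 * x.re

lemma mul_star_self (x : ℍ[ℚ,a,b]) : x * star x = (nrd x : ℍ[ℚ,a,b]) :=
  QuaternionAlgebra.mul_star_eq_coe x

lemma star_mul_self (x : ℍ[ℚ,a,b]) : star x * x = (nrd x : ℍ[ℚ,a,b]) := by
  rw [star_comm_self', mul_star_self]

lemma self_add_star (x : ℍ[ℚ,a,b]) : x + star x = (trd x : ℍ[ℚ,a,b]) :=
  by rw [QuaternionAlgebra.self_add_star', zero_mul, add_zero]; rfl

lemma star_eq (x : ℍ[ℚ,a,b]) : star x = (trd x : ℍ[ℚ,a,b]) - x := by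
  rw [← self_add_star]; abel

lemma nrd_mul (x y : ℍ[ℚ,a,b]) : nrd (x * y) = nrd x * nrd y := by
  apply QuaternionAlgebra.coe_injective (R := ℚ) (c₁ := a) (c₂ := 0) (c₃ := b)
  rw [← mul_star_self, star_mul]
  have hc : x * (nrd y : ℍ[ℚ,a,b]) = (nrd y : ℍ[ℚ,a,b]) * x :=
    (QuaternionAlgebra.coe_commutes _ x).symm
  calc x * y * (star y * star x) = x * (y * star y) * star x := by noncomm_ring
    _ = x * (nrd y : ℍ[ℚ,a,b]) * star x := by rw [mul_star_self]
    _ = (nrd y : ℍ[ℚ,a,b]) * (x * star x) := by rw [hc, mul_assoc]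
    _ = (nrd y : ℍ[ℚ,a,b]) * (nrd x : ℍ[ℚ,a,b]) := by rw [mul_star_self]
    _ = ((nrd x * nrd y : ℚ) : ℍ[ℚ,a,b]) := by
        rw [QuaternionAlgebra.coe_mul]; exact QuaternionAlgebra.coe_commutes _ _

lemma nrd_star (x : ℍ[ℚ,a,b]) : nrd (star x) = nrd x := by
  apply QuaternionAlgebra.coe_injective (R := ℚ) (c₁ := a) (c₂ := 0) (c₃ := b)
  rw [← mul_star_self, star_star, star_mul_self]

lemma nrd_one : nrd (1 : ℍ[ℚ,a,b]) = 1 := by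
  apply QuaternionAlgebra.coe_injective (R := ℚ) (c₁ := a) (c₂ := 0) (c₃ := b)
  rw [← mul_star_self]; simp

lemma nrd_smul (c : ℚ) (x : ℍ[ℚ,a,b]) : nrd (c • x) = c^2 * nrd x := by
  apply QuaternionAlgebra.coe_injective (R := ℚ) (c₁ := a) (c₂ := 0) (c₃ := b)
  rw [← mul_star_self, star_smul, smul_mul_smul_comm, mul_star_self,
    QuaternionAlgebra.smul_coe, star_trivial]
  congr 1
  ring

/-- polarization: x * star y + y * star x is the scalar nrd(x+y) - nrd x - nrd y -/
lemma polar (x y : ℍ[ℚ,a,b]) :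
    x * star y + y * star x = ((nrd (x+y) - nrd x - nrd y : ℚ) : ℍ[ℚ,a,b]) := by
  have h := mul_star_self (x + y)
  rw [star_add] at h
  have hexp : (x + y) * (star x + star y)
      = x * star x + (x * star y + y * star x) + y * star y := by noncomm_ring
  rw [hexp, mul_star_self x, mul_star_self y] at h
  push_cast
  rw [← h]; abel

/-- trace of x * star y equals the polar form -/
lemma trd_mul_star (x y : ℍ[ℚ,a,b]) :
    trd (x * star y) = nrd (x+y) - nrd x - nrd y := by
  apply QuaternionAlgebra.coe_injective (R := ℚ) (c₁ := a) (c₂ := 0) (c₃ := b)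
  rw [← self_add_star (x * star y), star_mul, star_star, polar]

lemma trd_comm (x y : ℍ[ℚ,a,b]) : trd (x * y) = trd (y * x) := by
  unfold trd
  rw [QuaternionAlgebra.re_mul, QuaternionAlgebra.re_mul]
  ring

/-- key identity: u * o * u = trd(o*u) • u - nrd u • star o -/
lemma mul_sandwich (u o : ℍ[ℚ,a,b]) :
    u * o * u = (trd (o * u) : ℍ[ℚ,a,b]) * u - (nrd u : ℍ[ℚ,a,b]) * star o := by
  set t : ℚ := trd (o * u) with ht
  have h1 : o * u = (t : ℍ[ℚ,a,b]) - star u * star o := by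
    rw [← star_mul, ← self_add_star (o * u)]; abel
  have hc : u * (t : ℍ[ℚ,a,b]) = (t : ℍ[ℚ,a,b]) * u :=
    (QuaternionAlgebra.coe_commutes _ u).symm
  calc u * o * u = u * (o * u) := by noncomm_ring
    _ = u * ((t : ℍ[ℚ,a,b]) - star u * star o) := by rw [← h1]
    _ = u * (t : ℍ[ℚ,a,b]) - (u * star u) * star o := by noncomm_ring
    _ = (t : ℍ[ℚ,a,b]) * u - (nrd u : ℍ[ℚ,a,b]) * star o := by rw [mul_star_self, hc]

end BrandtAux

-- Part B: orders, integrality of their elements, star-stability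
namespace BrandtAux

variable {a b : ℚ}

/-- a subring of the quaternion algebra as a ℤ-submodule -/
def OMod (O : Subring ℍ[ℚ,a,b]) : Submodule ℤ ℍ[ℚ,a,b] where
  carrier := O
  add_mem' := fun h1 h2 => add_mem h1 h2
  zero_mem' := zero_mem O
  smul_mem' := fun z x hx => zsmul_mem hx z

@[simp] lemma mem_OMod {O : Subring ℍ[ℚ,a,b]} {x : ℍ[ℚ,a,b]} : x ∈ OMod O ↔ x ∈ O := Iff.rfl

lemma OMod_coe (O : Subring ℍ[ℚ,a,b]) : (OMod O : Set ℍ[ℚ,a,b]) = (O : Set ℍ[ℚ,a,b]) := rfl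

lemma OMod_fg {O : Subring ℍ[ℚ,a,b]} (hO : IsOrder O) : (OMod O).FG := by
  obtain ⟨s, hs⟩ := hO.1
  exact ⟨s, SetLike.ext' hs⟩

lemma isIntegral_of_mem {O : Subring ℍ[ℚ,a,b]} (hO : IsOrder O) {x : ℍ[ℚ,a,b]}
    (hx : x ∈ O) : IsIntegral ℤ x := by
  refine IsIntegral.of_mem_of_fg (subalgebraOfSubring O) ?_ x hx
  obtain ⟨s, hs⟩ := hO.1
  exact ⟨s, SetLike.ext' hs⟩

/-- the star (conjugate) of an order, as a subring -/
def starSubring (O : Subring ℍ[ℚ,a,b]) : Subring ℍ[ℚ,a,b] where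
  carrier := star '' (O : Set ℍ[ℚ,a,b])
  one_mem' := ⟨1, one_mem O, star_one _⟩
  mul_mem' := by
    rintro _ _ ⟨x, hx, rfl⟩ ⟨y, hy, rfl⟩
    exact ⟨y * x, mul_mem hy hx, star_mul y x⟩
  add_mem' := by
    rintro _ _ ⟨x, hx, rfl⟩ ⟨y, hy, rfl⟩
    exact ⟨x + y, add_mem hx hy, star_add x y⟩
  zero_mem' := ⟨0, zero_mem O, star_zero _⟩
  neg_mem' := by
    rintro _ ⟨x, hx, rfl⟩
    exact ⟨-x, neg_mem hx, star_neg x⟩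

/-- star as a ℤ-linear map -/
def starL : ℍ[ℚ,a,b] →ₗ[ℤ] ℍ[ℚ,a,b] where
  toFun := star
  map_add' := star_add
  map_smul' := fun z x => star_zsmul z x

@[simp] lemma starL_apply (x : ℍ[ℚ,a,b]) : starL x = star x := rfl

/-- star as a ℚ-linear map -/
def starLQ : ℍ[ℚ,a,b] →ₗ[ℚ] ℍ[ℚ,a,b] where
  toFun := star
  map_add' := star_add
  map_smul' := fun c x => QuaternionAlgebra.star_smul c x

lemma isOrder_starSubring {O : Subring ℍ[ℚ,a,b]} (hO : IsOrder O) :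
    IsOrder (starSubring O) := by
  classical
  constructor
  · obtain ⟨s, hs⟩ := hO.1
    refine ⟨s.image star, ?_⟩
    have h1 : ((s.image star : Finset ℍ[ℚ,a,b]) : Set ℍ[ℚ,a,b]) = star '' (s : Set ℍ[ℚ,a,b]) := by
      simp [Finset.coe_image]
    rw [h1]
    have h2 : star '' (s : Set ℍ[ℚ,a,b]) = starL (a := a) (b := b) '' (s : Set ℍ[ℚ,a,b]) := rfl
    rw [h2, ← Submodule.map_span]
    have : (starSubring O : Set ℍ[ℚ,a,b]) = starL (a := a) (b := b) '' (O : Set ℍ[ℚ,a,b]) := rfl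
    rw [this, ← hs]
    rfl
  · have h2 : (starSubring O : Set ℍ[ℚ,a,b]) = starLQ (a := a) (b := b) '' (O : Set ℍ[ℚ,a,b]) := rfl
    rw [h2, ← Submodule.map_span, hO.2]
    rw [Submodule.map_top]
    rw [LinearMap.range_eq_top]
    intro y
    exact ⟨star y, star_star y⟩

/-- elements of orders have integral trace and norm -/
lemma trd_nrd_int {O : Subring ℍ[ℚ,a,b]} (hO : IsOrder O) {x : ℍ[ℚ,a,b]} (hx : x ∈ O) :
    (∃ z : ℤ, (z : ℚ) = trd x) ∧ (∃ z : ℤ, (z : ℚ) = nrd x) := by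
  classical
  have hxint : IsIntegral ℤ x := isIntegral_of_mem hO hx
  have hsint : IsIntegral ℤ (star x) :=
    isIntegral_of_mem (isOrder_starSubring hO) ⟨x, hx, rfl⟩
  -- work in the commutative subalgebra ℚ[x]
  let C := Algebra.adjoin ℚ ({x} : Set ℍ[ℚ,a,b])
  letI : CommRing C := Algebra.adjoinCommRingOfComm ℚ (by
    rintro y hy z hz
    rw [Set.mem_singleton_iff] at hy hz
    subst hy; subst hz; rfl)
  have hxC : x ∈ C := Algebra.subset_adjoin rfl
  have hstarC : star x ∈ C := by
    rw [star_eq]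
    exact sub_mem (Subalgebra.algebraMap_mem C (trd x)) hxC
  haveI : Nontrivial C := ⟨⟨1, one_mem C⟩, ⟨0, zero_mem C⟩, by
    intro h
    exact one_ne_zero (congrArg Subtype.val h)⟩
  -- the inclusion C → ℍ as ℤ-algebra hom
  let ι : C →ₐ[ℤ] ℍ[ℚ,a,b] := (C.val.toRingHom).toIntAlgHom
  have hι : Function.Injective ι := Subtype.val_injective
  have hxC' : IsIntegral ℤ (⟨x, hxC⟩ : C) := (isIntegral_algHom_iff ι hι).mp hxint
  have hsC' : IsIntegral ℤ (⟨star x, hstarC⟩ : C) := (isIntegral_algHom_iff ι hι).mp hsint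
  have hadd : IsIntegral ℤ ((⟨x, hxC⟩ : C) + ⟨star x, hstarC⟩) := hxC'.add hsC'
  have hmul : IsIntegral ℤ ((⟨x, hxC⟩ : C) * ⟨star x, hstarC⟩) := hxC'.mul hsC'
  have hQC : Function.Injective (algebraMap ℚ C) := RingHom.injective _
  constructor
  · have : ((⟨x, hxC⟩ : C) + ⟨star x, hstarC⟩) = algebraMap ℚ C (trd x) := by
      apply Subtype.val_injective
      exact self_add_star x
    rw [this] at hadd
    have : IsIntegral ℤ (trd x) :=
      (isIntegral_algHom_iff ((algebraMap ℚ C).toIntAlgHom) hQC).mp hadd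
    obtain ⟨z, hz⟩ := IsIntegrallyClosed.isIntegral_iff.mp this
    exact ⟨z, hz⟩
  · have : ((⟨x, hxC⟩ : C) * ⟨star x, hstarC⟩) = algebraMap ℚ C (nrd x) := by
      apply Subtype.val_injective
      exact mul_star_self x
    rw [this] at hmul
    have : IsIntegral ℤ (nrd x) :=
      (isIntegral_algHom_iff ((algebraMap ℚ C).toIntAlgHom) hQC).mp hmul
    obtain ⟨z, hz⟩ := IsIntegrallyClosed.isIntegral_iff.mp this
    exact ⟨z, hz⟩

/-- orders are stable under star -/
lemma star_mem_order {O : Subring ℍ[ℚ,a,b]} (hO : IsOrder O) {x : ℍ[ℚ,a,b]} (hx : x ∈ O) :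
    star x ∈ O := by
  obtain ⟨⟨z, hz⟩, -⟩ := trd_nrd_int hO hx
  rw [star_eq, ← hz, QuaternionAlgebra.coe_intCast]
  exact sub_mem (intCast_mem O z) hx

end BrandtAux

-- Part C: the key lemma: integral elements compatible with a maximal order lie in it
namespace BrandtAux

variable {a b : ℚ}

lemma OMod_mul_self {O : Subring ℍ[ℚ,a,b]} : OMod O * OMod O = OMod O := by
  apply le_antisymm
  · exact Submodule.mul_le.2 fun x hx y hy => show x * y ∈ O from mul_mem hx hy
  · intro x hx
    have := Submodule.mul_mem_mul (show (1:ℍ[ℚ,a,b]) ∈ OMod O from one_mem O) hx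
    simpa using this

/-- **Key lemma.** If `O` is a maximal order and `u` has integral norm and integral
trace against all of `O`, then `u ∈ O`. Proof: `O + OuO` is an order. -/
lemma mem_of_maximal {O : Subring ℍ[ℚ,a,b]} (hO : IsMaximalOrder O) (u : ℍ[ℚ,a,b])
    (hnrd : ∃ z : ℤ, (z : ℚ) = nrd u)
    (htrd : ∀ o ∈ O, ∃ z : ℤ, (z : ℚ) = trd (o * u)) : u ∈ O := by
  classical
  set M : Submodule ℤ ℍ[ℚ,a,b] := OMod O with hM
  set U : Submodule ℤ ℍ[ℚ,a,b] := Submodule.span ℤ {u} with hU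
  set Λ : Submodule ℤ ℍ[ℚ,a,b] := M ⊔ M * U * M with hΛ
  have hMM : M * M = M := OMod_mul_self
  -- the sandwich bound : U * M * U ≤ U ⊔ M
  have hsand : U * M * U ≤ U ⊔ M := by
    rw [mul_assoc]
    refine Submodule.mul_le.2 fun w hw z hz => ?_
    obtain ⟨cw, rfl⟩ := Submodule.mem_span_singleton.mp hw
    -- z ∈ M * U
    refine Submodule.mul_induction_on hz ?_ ?_
    · rintro m hm v hv
      obtain ⟨cv, rfl⟩ := Submodule.mem_span_singleton.mp hv
      have hm' : m ∈ O := hm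
      obtain ⟨zt, hzt⟩ := htrd m hm'
      obtain ⟨zn, hzn⟩ := hnrd
      have key : u * m * u = zt • u - zn • star m := by
        rw [mul_sandwich u m, ← hzt, ← hzn, QuaternionAlgebra.coe_intCast,
          QuaternionAlgebra.coe_intCast, ← zsmul_eq_mul, ← zsmul_eq_mul]
      have harr : (cw • u) * (m * cv • u) = (cw * cv) • (u * m * u) := by
        rw [smul_mul_assoc, mul_smul_comm, mul_smul_comm, smul_smul]
        congr 1
        noncomm_ring
      rw [harr, key, smul_sub]
      refine sub_mem ?_ ?_
      · exact Submodule.mem_sup_left (Submodule.smul_mem _ _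
          (Submodule.smul_mem _ _ (Submodule.mem_span_singleton_self u)))
      · refine Submodule.mem_sup_right (Submodule.smul_mem _ _ (Submodule.smul_mem _ _ ?_))
        exact star_mem_order hO.1 hm'
    · intro z1 z2 h1 h2
      rw [mul_add]
      exact add_mem h1 h2
  -- Λ is closed under multiplication
  have hΛmul : Λ * Λ ≤ Λ := by
    have e1 : M * (M * U * M) = M * U * M := by
      rw [show M * (M * U * M) = (M * M) * U * M by noncomm_ring, hMM]
    have e2 : (M * U * M) * M = M * U * M := by
      rw [show (M * U * M) * M = M * U * (M * M) by noncomm_ring, hMM]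
    have e3 : (M * U * M) * (M * U * M) ≤ Λ := by
      have expand : (M * U * M) * (M * U * M) = M * ((U * M * U) * M) := by
        rw [show (M * U * M) * (M * U * M) = M * (U * (M * M) * U * M) by noncomm_ring, hMM]
      rw [expand]
      calc M * ((U * M * U) * M) ≤ M * ((U ⊔ M) * M) :=
            mul_le_mul' le_rfl (mul_le_mul' hsand le_rfl)
        _ = M * (U * M) ⊔ M := by
            rw [Submodule.sup_mul, Submodule.mul_sup, hMM, hMM]
        _ ≤ Λ := sup_le (by rw [← mul_assoc]; exact le_sup_right) le_sup_left
    calc Λ * Λ = (M ⊔ M * U * M) * (M ⊔ M * U * M) := rfl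
      _ = M * M ⊔ M * (M * U * M) ⊔ ((M * U * M) * M ⊔ (M * U * M) * (M * U * M)) := by
          rw [Submodule.sup_mul, Submodule.mul_sup, Submodule.mul_sup]
      _ ≤ Λ := by
          rw [hMM, e1, e2]
          exact sup_le (sup_le le_sup_left le_sup_right) (sup_le le_sup_right e3)
  -- Λ as a subring
  have h1Λ : (1 : ℍ[ℚ,a,b]) ∈ Λ := Submodule.mem_sup_left (one_mem O)
  let Λs : Subring ℍ[ℚ,a,b] :=
    { carrier := Λ
      one_mem' := h1Λ
      mul_mem' := fun hx hy => hΛmul (Submodule.mul_mem_mul hx hy)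
      add_mem' := fun hx hy => add_mem hx hy
      zero_mem' := zero_mem Λ
      neg_mem' := fun hx => neg_mem hx }
  -- Λ is an order
  have hΛfg : Λ.FG := by
    refine Submodule.FG.sup (OMod_fg hO.1) ?_
    exact Submodule.FG.mul (Submodule.FG.mul (OMod_fg hO.1) (Submodule.fg_span_singleton u))
      (OMod_fg hO.1)
  have hΛord : IsOrder Λs := by
    constructor
    · obtain ⟨s, hs⟩ := hΛfg
      exact ⟨s, by rw [hs]; rfl⟩
    · have hsub : (O : Set ℍ[ℚ,a,b]) ⊆ (Λs : Set ℍ[ℚ,a,b]) :=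
        fun x hx => Submodule.mem_sup_left hx
      have := Submodule.span_mono (R := ℚ) hsub
      rw [hO.1.2] at this
      exact le_antisymm le_top this
  -- maximality
  have hOΛ : O ≤ Λs := fun x hx => Submodule.mem_sup_left hx
  have hEq : Λs = O := hO.2 Λs hΛord hOΛ
  have huΛ : u ∈ Λ := by
    refine Submodule.mem_sup_right ?_
    have h1 : (1 : ℍ[ℚ,a,b]) ∈ M := one_mem O
    have := Submodule.mul_mem_mul (Submodule.mul_mem_mul h1
      (Submodule.mem_span_singleton_self u)) h1
    simpa using this
  have : u ∈ Λs := huΛ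
  rw [hEq] at this
  exact this

end BrandtAux

-- Part D: the norm content of a lattice
namespace BrandtAux

variable {a b : ℚ}

/-- the polar form as a ℤ-bilinear map -/
noncomputable def polarB : ℍ[ℚ,a,b] →ₗ[ℤ] ℍ[ℚ,a,b] →ₗ[ℤ] ℚ :=
  LinearMap.mk₂ ℤ (fun x y => trd (x * star y))
    (fun x x' y => by
      unfold trd
      rw [add_mul]
      simp only [QuaternionAlgebra.re_add]
      ring)
    (fun z x y => by
      unfold trd
      rw [smul_mul_assoc, QuaternionAlgebra.re_smul, zsmul_eq_mul, zsmul_eq_mul]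
      push_cast
      ring)
    (fun x y y' => by
      unfold trd
      rw [star_add, mul_add]
      simp only [QuaternionAlgebra.re_add]
      ring)
    (fun z x y => by
      unfold trd
      rw [star_zsmul, mul_smul_comm, QuaternionAlgebra.re_smul, zsmul_eq_mul, zsmul_eq_mul]
      push_cast
      ring)

@[simp] lemma polarB_apply (x y : ℍ[ℚ,a,b]) : polarB x y = trd (x * star y) := rfl

/-- norms of elements of a f.g. lattice land in a f.g. submodule of ℚ -/
lemma nrd_mem_fg (J : Submodule ℤ ℍ[ℚ,a,b]) (hfg : J.FG) :
    ∃ Q₀ : Submodule ℤ ℚ, Q₀.FG ∧ ∀ x ∈ J, nrd x ∈ Q₀ := by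
  obtain ⟨s, hs⟩ := hfg
  refine ⟨Submodule.span ℤ (nrd '' (s : Set ℍ[ℚ,a,b])) ⊔
    Submodule.map₂ (polarB (a := a) (b := b)) J J, Submodule.FG.sup
      (Submodule.fg_span ((s : Set ℍ[ℚ,a,b]).toFinite.image _))
      (Submodule.FG.map₂ _ ⟨s, hs⟩ ⟨s, hs⟩), ?_⟩
  intro x hx
  rw [← hs] at hx
  set Q₀ := Submodule.span ℤ (nrd '' (s : Set ℍ[ℚ,a,b])) ⊔
    Submodule.map₂ (polarB (a := a) (b := b)) J J with hQ₀
  refine Submodule.span_induction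
    (p := fun x _ => nrd x ∈ Q₀ ∧ x ∈ J) ?_ ?_ ?_ ?_ hx |>.1
  · intro w hw
    constructor
    · exact Submodule.mem_sup_left (Submodule.subset_span ⟨w, hw, rfl⟩)
    · rw [← hs]; exact Submodule.subset_span hw
  · constructor
    · have : nrd (0 : ℍ[ℚ,a,b]) = 0 := by
        apply QuaternionAlgebra.coe_injective (R := ℚ) (c₁ := a) (c₂ := 0) (c₃ := b)
        rw [← mul_star_self]; simp
      rw [this]; exact zero_mem _
    · exact zero_mem J
  · rintro x y _ _ ⟨hx1, hx2⟩ ⟨hy1, hy2⟩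
    constructor
    · have hpol : nrd (x + y) = nrd x + nrd y + trd (x * star y) := by
        have := trd_mul_star x y
        linarith
      rw [hpol]
      refine add_mem (add_mem hx1 hy1) ?_
      exact Submodule.mem_sup_right (Submodule.apply_mem_map₂ _ hx2 hy2)
    · exact add_mem hx2 hy2
  · rintro z x _ ⟨hx1, hx2⟩
    constructor
    · have : nrd (z • x) = (z * z) • nrd x := by
        have h1 : z • x = ((z : ℚ)) • x := by
          rw [Int.cast_smul_eq_zsmul]
        rw [h1, nrd_smul]
        push_cast
        rw [zsmul_eq_mul]
        push_cast
        ring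
      rw [this]
      exact Submodule.smul_mem _ _ hx1
    · exact Submodule.smul_mem _ _ hx2

/-- every nonzero f.g. submodule of ℚ is principal -/
lemma fg_rat_submodule_principal (Q : Submodule ℤ ℚ) (hfg : Q.FG) (hne : Q ≠ ⊥) :
    ∃ q : ℚ, q ≠ 0 ∧ Q = Submodule.span ℤ {q} := by
  classical
  obtain ⟨g, hg⟩ := hfg
  -- common denominator
  set d : ℤ := ∏ r ∈ g, (r.den : ℤ) with hd
  have hd0 : d ≠ 0 := by
    rw [hd]
    exact Finset.prod_ne_zero_iff.2 fun r _ => Int.natCast_ne_zero.2 r.pos.ne'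
  set φ : ℤ →ₗ[ℤ] ℚ := LinearMap.toSpanSingleton ℤ ℚ ((d : ℚ)⁻¹) with hφ
  have hφz : ∀ z : ℤ, φ z = (z : ℚ) / d := fun z => by
    rw [hφ, LinearMap.toSpanSingleton_apply, zsmul_eq_mul, div_eq_mul_inv]
  have hQle : Q ≤ LinearMap.range φ := by
    rw [← hg, Submodule.span_le]
    intro r hr
    have hden : ((r.den : ℤ)) ∣ d := Finset.dvd_prod_of_mem _ hr
    obtain ⟨k, hk⟩ := hden
    refine ⟨r.num * k, ?_⟩
    rw [hφz]
    have hden0 : ((r.den : ℚ)) ≠ 0 := Nat.cast_ne_zero.2 r.pos.ne'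
    have hk0 : (k : ℚ) ≠ 0 := by
      intro h
      rw [show k = 0 by exact_mod_cast h, mul_zero] at hk
      exact hd0 hk
    have hdq : (d : ℚ) = r.den * k := by exact_mod_cast congrArg (Int.cast : ℤ → ℚ) hk
    have hnum : (r.num : ℚ) = r * r.den := (div_eq_iff hden0).mp (Rat.num_div_den r)
    push_cast
    rw [hdq, hnum]
    field_simp
  set I : Ideal ℤ := Submodule.comap φ Q with hI
  obtain ⟨z₀, hz₀⟩ := (IsPrincipalIdealRing.principal I).principal
  have hQeq : Q = Submodule.map φ I := by
    rw [hI, Submodule.map_comap_eq, inf_eq_right.2 hQle]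
  have hmapspan : Submodule.map φ (Submodule.span ℤ ({z₀} : Set ℤ)) = Submodule.span ℤ ({φ z₀} : Set ℚ) := by
    rw [Submodule.map_span, Set.image_singleton]
  refine ⟨φ z₀, ?_, ?_⟩
  · intro h0
    apply hne
    rw [hQeq, hz₀, hmapspan, h0]
    exact Submodule.span_zero_singleton ℤ
  · rw [hQeq, hz₀, hmapspan]

end BrandtAux

-- Part E: the connecting lattice and its inverse
namespace BrandtAux

variable {a b : ℚ}

lemma map_starL_mul (M N : Submodule ℤ ℍ[ℚ,a,b]) :
    Submodule.map starL (M * N) = Submodule.map starL N * Submodule.map starL M := by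
  conv_lhs => rw [← Submodule.span_eq M, ← Submodule.span_eq N, Submodule.span_mul_span,
    Submodule.map_span]
  conv_rhs => rw [← Submodule.span_eq (Submodule.map starL N),
    ← Submodule.span_eq (Submodule.map starL M), Submodule.span_mul_span]
  congr 1
  ext z
  constructor
  · rintro ⟨w, hw, rfl⟩
    rw [Set.mem_mul] at hw
    obtain ⟨m, hm, n, hn, rfl⟩ := hw
    exact ⟨star n, ⟨n, hn, rfl⟩, star m, ⟨m, hm, rfl⟩, (star_mul m n).symm⟩
  · rintro ⟨_, ⟨n, hn, rfl⟩, _, ⟨m, hm, rfl⟩, rfl⟩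
    exact ⟨m * n, Set.mul_mem_mul hm hn, star_mul m n⟩

lemma map_starL_OMod {O : Subring ℍ[ℚ,a,b]} (hO : IsOrder O) :
    Submodule.map starL (OMod O) = OMod O := by
  ext x
  constructor
  · rintro ⟨y, hy, rfl⟩
    exact star_mem_order hO hy
  · intro hx
    exact ⟨star x, star_mem_order hO hx, star_star x⟩

section Connecting

variable {O O' : Subring ℍ[ℚ,a,b]}

/-- **Main theorem (elementary Brandt trick).** The connecting lattice `J = O·O'`
satisfies `J·J̄ = q·O` and `J̄·J = q·O'` where `q` generates the ℤ-module of norms. -/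
lemma connecting (hO : IsMaximalOrder O) (hO' : IsMaximalOrder O') : ∃ q : ℚ, q ≠ 0 ∧
    (OMod O * OMod O') * Submodule.map starL (OMod O * OMod O')
      = Submodule.span ℤ {((q : ℚ) : ℍ[ℚ,a,b])} * OMod O ∧
    Submodule.map starL (OMod O * OMod O') * (OMod O * OMod O')
      = Submodule.span ℤ {((q : ℚ) : ℍ[ℚ,a,b])} * OMod O' := by
  classical
  set M : Submodule ℤ ℍ[ℚ,a,b] := OMod O with hM
  set M' : Submodule ℤ ℍ[ℚ,a,b] := OMod O' with hM'
  set J : Submodule ℤ ℍ[ℚ,a,b] := M * M' with hJ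
  set Jb : Submodule ℤ ℍ[ℚ,a,b] := Submodule.map starL J with hJb
  have hJfg : J.FG := Submodule.FG.mul (OMod_fg hO.1) (OMod_fg hO'.1)
  have h1J : (1 : ℍ[ℚ,a,b]) ∈ J := by
    have := Submodule.mul_mem_mul (show (1:ℍ[ℚ,a,b]) ∈ M from one_mem O)
      (show (1:ℍ[ℚ,a,b]) ∈ M' from one_mem O')
    simpa using this
  have hJbeq : Jb = M' * M := by
    rw [hJb, hJ, map_starL_mul, map_starL_OMod hO.1, map_starL_OMod hO'.1]
  have hMJ : M * J = J := by rw [hJ, ← mul_assoc, OMod_mul_self]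
  have hJM' : J * M' = J := by rw [hJ, mul_assoc, OMod_mul_self]
  have hJbM : Jb * M = Jb := by rw [hJbeq, mul_assoc, OMod_mul_self]
  have hM'Jb : M' * Jb = Jb := by rw [hJbeq, ← mul_assoc, OMod_mul_self]
  -- the norm content
  set Q : Submodule ℤ ℚ := Submodule.span ℤ (nrd '' (J : Set ℍ[ℚ,a,b])) with hQ
  have hQfg : Q.FG := by
    obtain ⟨Q₀, hQ₀fg, hQ₀⟩ := nrd_mem_fg J hJfg
    have hle : Q ≤ Q₀ := Submodule.span_le.2 (by rintro _ ⟨x, hx, rfl⟩; exact hQ₀ x hx)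
    haveI : IsNoetherian ℤ Q₀ := isNoetherian_of_fg_of_noetherian Q₀ hQ₀fg
    have hfg' : (Submodule.comap Q₀.subtype Q).FG := IsNoetherian.noetherian _
    have : Submodule.map Q₀.subtype (Submodule.comap Q₀.subtype Q) = Q := by
      rw [Submodule.map_comap_subtype, inf_eq_right.2 hle]
    rw [← this]
    exact hfg'.map _
  have hQne : Q ≠ ⊥ := by
    intro hbot
    have h1 : (1 : ℚ) ∈ Q := by
      rw [hQ]
      refine Submodule.subset_span ⟨1, h1J, nrd_one⟩
    rw [hbot] at h1
    exact one_ne_zero (Submodule.mem_bot ℤ |>.1 h1)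
  obtain ⟨q, hq0, hQq⟩ := fg_rat_submodule_principal Q hQfg hQne
  have hnrdJ : ∀ x ∈ J, ∃ z : ℤ, nrd x = z * q := by
    intro x hx
    have : nrd x ∈ Q := Submodule.subset_span ⟨x, hx, rfl⟩
    rw [hQq] at this
    obtain ⟨z, hz⟩ := Submodule.mem_span_singleton.1 this
    exact ⟨z, by rw [← hz, zsmul_eq_mul]⟩
  -- integral traces for products
  have htrdJ : ∀ x ∈ J, ∀ y ∈ J, ∃ z : ℤ, trd (x * star y) = z * q := by
    intro x hx y hy
    obtain ⟨z1, hz1⟩ := hnrdJ (x + y) (add_mem hx hy)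
    obtain ⟨z2, hz2⟩ := hnrdJ x hx
    obtain ⟨z3, hz3⟩ := hnrdJ y hy
    exact ⟨z1 - z2 - z3, by rw [trd_mul_star, hz1, hz2, hz3]; push_cast; ring⟩
  -- the universal "division by q" lemma
  have hdiv : ∀ x ∈ J, ∀ y ∈ J, q⁻¹ • (x * star y) ∈ O := by
    intro x hx y hy
    refine mem_of_maximal hO _ ?_ ?_
    · obtain ⟨z2, hz2⟩ := hnrdJ x hx
      obtain ⟨z3, hz3⟩ := hnrdJ y hy
      refine ⟨z2 * z3, ?_⟩
      rw [nrd_smul, nrd_mul, nrd_star, hz2, hz3]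
      field_simp
      push_cast
      rfl
    · intro o ho
      obtain ⟨z, hz⟩ := htrdJ (o * x) (by rw [← hMJ]; exact Submodule.mul_mem_mul ho hx) y hy
      refine ⟨z, ?_⟩
      have harr : o * (q⁻¹ • (x * star y)) = q⁻¹ • ((o * x) * star y) := by
        rw [mul_smul_comm]
        congr 1
        noncomm_ring
      have htr : trd (q⁻¹ • ((o * x) * star y)) = q⁻¹ * trd ((o * x) * star y) := by
        unfold trd
        rw [QuaternionAlgebra.re_smul, smul_eq_mul]
        ring
      rw [harr, htr, hz]
      field_simp
  have hdiv' : ∀ x ∈ J, ∀ y ∈ J, q⁻¹ • (star x * y) ∈ O' := by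
    intro x hx y hy
    refine mem_of_maximal hO' _ ?_ ?_
    · obtain ⟨z2, hz2⟩ := hnrdJ x hx
      obtain ⟨z3, hz3⟩ := hnrdJ y hy
      refine ⟨z2 * z3, ?_⟩
      rw [nrd_smul, nrd_mul, nrd_star, hz2, hz3]
      field_simp
      push_cast
      rfl
    · intro o ho
      have hyo : y * o ∈ J := by rw [← hJM']; exact Submodule.mul_mem_mul hy ho
      obtain ⟨z, hz⟩ := htrdJ (y * o) hyo x hx
      refine ⟨z, ?_⟩
      have harr : o * (q⁻¹ • (star x * y)) = q⁻¹ • (o * (star x * y)) := mul_smul_comm _ _ _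
      have htr : trd (q⁻¹ • (o * (star x * y))) = q⁻¹ * trd (o * (star x * y)) := by
        unfold trd
        rw [QuaternionAlgebra.re_smul, smul_eq_mul]
        ring
      have hcyc : trd (o * (star x * y)) = trd ((y * o) * star x) := by
        rw [trd_comm o (star x * y),
          show (star x * y) * o = star x * (y * o) by noncomm_ring,
          trd_comm (star x) (y * o)]
      rw [harr, htr, hcyc, hz]
      field_simp
  -- q as an element of the products
  have hcoeQ : ∀ r ∈ Q, ((r : ℚ) : ℍ[ℚ,a,b]) ∈ J * Jb ∧ ((r : ℚ) : ℍ[ℚ,a,b]) ∈ Jb * J := by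
    intro r hr
    refine Submodule.span_induction ?_ ?_ ?_ ?_ hr
    · rintro _ ⟨x, hx, rfl⟩
      constructor
      · rw [← mul_star_self]
        exact Submodule.mul_mem_mul hx (Submodule.mem_map_of_mem hx)
      · rw [← star_mul_self]
        exact Submodule.mul_mem_mul (Submodule.mem_map_of_mem hx) hx
    · constructor <;> · rw [QuaternionAlgebra.coe_zero]; exact zero_mem _
    · rintro r s _ _ ⟨h1, h2⟩ ⟨h3, h4⟩
      constructor <;> · rw [QuaternionAlgebra.coe_add]; exact add_mem ‹_› ‹_›
    · rintro z r _ ⟨h1, h2⟩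
      have hz : ((z • r : ℚ) : ℍ[ℚ,a,b]) = z • ((r : ℚ) : ℍ[ℚ,a,b]) := by
        rw [zsmul_eq_mul, QuaternionAlgebra.coe_mul, QuaternionAlgebra.coe_intCast,
          ← zsmul_eq_mul]
      constructor <;> · rw [hz]; exact Submodule.smul_mem _ _ ‹_›
  have hqQ : q ∈ Q := by rw [hQq]; exact Submodule.mem_span_singleton_self q
  have hqJJb : ((q : ℚ) : ℍ[ℚ,a,b]) ∈ J * Jb := (hcoeQ q hqQ).1
  have hqJbJ : ((q : ℚ) : ℍ[ℚ,a,b]) ∈ Jb * J := (hcoeQ q hqQ).2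
  refine ⟨q, hq0, ?_, ?_⟩
  · apply le_antisymm
    · refine Submodule.mul_le.2 fun x hx v hv => ?_
      obtain ⟨y, hy, rfl⟩ := hv
      have hu : q⁻¹ • (x * star y) ∈ O := hdiv x hx y hy
      have heq : x * star y = ((q : ℚ) : ℍ[ℚ,a,b]) * (q⁻¹ • (x * star y)) := by
        rw [QuaternionAlgebra.coe_mul_eq_smul, smul_smul, mul_inv_cancel₀ hq0, one_smul]
      show x * star y ∈ _
      rw [heq]
      exact Submodule.mul_mem_mul (Submodule.mem_span_singleton_self _) hu
    · refine Submodule.mul_le.2 fun w hw o ho => ?_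
      obtain ⟨c, rfl⟩ := Submodule.mem_span_singleton.1 hw
      have : ((q : ℚ) : ℍ[ℚ,a,b]) * o ∈ (J * Jb) * M :=
        Submodule.mul_mem_mul hqJJb ho
      have hS : (J * Jb) * M = J * Jb := by rw [mul_assoc, hJbM]
      rw [hS] at this
      rw [smul_mul_assoc]
      exact Submodule.smul_mem _ _ this
  · apply le_antisymm
    · refine Submodule.mul_le.2 fun v hv x hx => ?_
      obtain ⟨y, hy, rfl⟩ := hv
      have hu : q⁻¹ • (star y * x) ∈ O' := hdiv' y hy x hx
      have heq : star y * x = ((q : ℚ) : ℍ[ℚ,a,b]) * (q⁻¹ • (star y * x)) := by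
        rw [QuaternionAlgebra.coe_mul_eq_smul, smul_smul, mul_inv_cancel₀ hq0, one_smul]
      show star y * x ∈ _
      rw [heq]
      exact Submodule.mul_mem_mul (Submodule.mem_span_singleton_self _) hu
    · refine Submodule.mul_le.2 fun w hw o ho => ?_
      obtain ⟨c, rfl⟩ := Submodule.mem_span_singleton.1 hw
      have : ((q : ℚ) : ℍ[ℚ,a,b]) * o ∈ (Jb * J) * M' :=
        Submodule.mul_mem_mul hqJbJ ho
      have hS : (Jb * J) * M' = Jb * J := by rw [mul_assoc, hJM']
      rw [hS] at this
      rw [smul_mul_assoc]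
      exact Submodule.smul_mem _ _ this

end Connecting

end BrandtAux

-- Part F: transfer lemmas and final assembly
namespace BrandtAux

variable {a b : ℚ}

lemma central_comm (r : ℚ) (X : Submodule ℤ ℍ[ℚ,a,b]) :
    X * Submodule.span ℤ {((r : ℚ) : ℍ[ℚ,a,b])}
      = Submodule.span ℤ {((r : ℚ) : ℍ[ℚ,a,b])} * X := by
  conv_lhs => rw [← Submodule.span_eq X, Submodule.span_mul_span]
  conv_rhs => rw [← Submodule.span_eq X, Submodule.span_mul_span]
  congr 1
  ext z
  constructor
  · rintro ⟨x, hx, y, hy, rfl⟩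
    rw [Set.mem_singleton_iff] at hy
    subst hy
    exact ⟨_, rfl, x, hx, QuaternionAlgebra.coe_commutes r x⟩
  · rintro ⟨y, hy, x, hx, rfl⟩
    rw [Set.mem_singleton_iff] at hy
    subst hy
    exact ⟨x, hx, _, rfl, (QuaternionAlgebra.coe_commutes r x).symm⟩

lemma span_singleton_coe_mul (r s : ℚ) :
    Submodule.span ℤ {((r : ℚ) : ℍ[ℚ,a,b])} * Submodule.span ℤ {((s : ℚ) : ℍ[ℚ,a,b])}
      = Submodule.span ℤ {((r * s : ℚ) : ℍ[ℚ,a,b])} := by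
  rw [Submodule.span_mul_span, Set.singleton_mul_singleton, QuaternionAlgebra.coe_mul]

lemma mul_leftIdeal {P : Subring ℍ[ℚ,a,b]} {X K : Submodule ℤ ℍ[ℚ,a,b]}
    (hXfg : X.FG) (hXstab : OMod P * X ≤ X)
    (hc : ∃ c : ℚ, c ≠ 0 ∧ ((c : ℚ) : ℍ[ℚ,a,b]) ∈ X)
    (hKfg : K.FG) (hKspan : Submodule.span ℚ (K : Set ℍ[ℚ,a,b]) = ⊤) :
    IsLeftIdeal P (X * K) := by
  refine ⟨hXfg.mul hKfg, ?_, ?_⟩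
  · obtain ⟨c, hc0, hcX⟩ := hc
    apply le_antisymm le_top
    rw [← hKspan]
    refine Submodule.span_le.2 fun x hx => ?_
    have h1 : ((c : ℚ) : ℍ[ℚ,a,b]) * x ∈ X * K := Submodule.mul_mem_mul hcX hx
    have h2 : ((c : ℚ) : ℍ[ℚ,a,b]) * x
        ∈ Submodule.span ℚ ((X * K : Submodule ℤ ℍ[ℚ,a,b]) : Set ℍ[ℚ,a,b]) :=
      Submodule.subset_span h1
    have h3 := Submodule.smul_mem _ c⁻¹ h2
    rw [QuaternionAlgebra.coe_mul_eq_smul, smul_smul, inv_mul_cancel₀ hc0, one_smul] at h3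
    exact h3
  · intro o ho x hx
    have h1 : o * x ∈ OMod P * (X * K) :=
      Submodule.mul_mem_mul (show o ∈ OMod P from ho) hx
    have hle : OMod P * (X * K) ≤ X * K := by
      rw [← mul_assoc]
      exact mul_le_mul' hXstab le_rfl
    exact hle h1

lemma mul_map_mulRight (X Y : Submodule ℤ ℍ[ℚ,a,b]) (γ : ℍ[ℚ,a,b]) :
    X * Submodule.map (LinearMap.mulRight ℤ γ) Y
      = Submodule.map (LinearMap.mulRight ℤ γ) (X * Y) := by
  conv_lhs => rw [← Submodule.span_eq X, ← Submodule.span_eq Y, Submodule.map_span,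
    Submodule.span_mul_span]
  conv_rhs => rw [← Submodule.span_eq X, ← Submodule.span_eq Y, Submodule.span_mul_span,
    Submodule.map_span]
  congr 1
  ext z
  constructor
  · rintro ⟨x, hx, _, ⟨y, hy, rfl⟩, rfl⟩
    exact ⟨x * y, Set.mul_mem_mul hx hy, by
      simp only [LinearMap.mulRight_apply, mul_assoc]⟩
  · rintro ⟨_, ⟨x, hx, y, hy, rfl⟩, rfl⟩
    exact ⟨x, hx, y * γ, ⟨y, hy, rfl⟩, by
      simp only [LinearMap.mulRight_apply, mul_assoc]⟩

lemma equiv_transfer (X : Submodule ℤ ℍ[ℚ,a,b]) {K1 K2 : Submodule ℤ ℍ[ℚ,a,b]}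
    (h : IdealEquiv K1 K2) : IdealEquiv (X * K1) (X * K2) := by
  obtain ⟨γ, hγ, hset⟩ := h
  refine ⟨γ, hγ, ?_⟩
  have hK : K1 = Submodule.map (LinearMap.mulRight ℤ γ) K2 := by
    apply SetLike.ext'
    rw [hset]
    rfl
  rw [hK, mul_map_mulRight]
  rfl

lemma OMod_mul_leftIdeal {P : Subring ℍ[ℚ,a,b]} {K : Submodule ℤ ℍ[ℚ,a,b]}
    (hK : IsLeftIdeal P K) : OMod P * K = K := by
  apply le_antisymm
  · exact Submodule.mul_le.2 fun o ho x hx => hK.2.2 o ho x hx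
  · intro x hx
    have := Submodule.mul_mem_mul (show (1:ℍ[ℚ,a,b]) ∈ OMod P from one_mem P) hx
    simpa using this

/-- main bijection statement, in terms of the primed definitions -/
theorem main (O O' : Subring ℍ[ℚ,a,b]) (hO : IsMaximalOrder O) (hO' : IsMaximalOrder O') :
    Nonempty
      ((Quot fun I J : {I : Submodule ℤ ℍ[ℚ,a,b] // IsLeftIdeal O I} =>
          IdealEquiv I.1 J.1) ≃
        Quot fun I J : {I : Submodule ℤ ℍ[ℚ,a,b] // IsLeftIdeal O' I} =>
          IdealEquiv I.1 J.1) := by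
  classical
  obtain ⟨q, hq0, hS, hf⟩ := connecting hO hO'
  set M : Submodule ℤ ℍ[ℚ,a,b] := OMod O with hM
  set M' : Submodule ℤ ℍ[ℚ,a,b] := OMod O' with hM'
  set J : Submodule ℤ ℍ[ℚ,a,b] := M * M' with hJ
  set Jb : Submodule ℤ ℍ[ℚ,a,b] := Submodule.map starL J with hJb
  set C : Submodule ℤ ℍ[ℚ,a,b] := Submodule.span ℤ {((q⁻¹ : ℚ) : ℍ[ℚ,a,b])} with hC
  set Jd : Submodule ℤ ℍ[ℚ,a,b] := C * Jb with hJd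
  have hJbeq : Jb = M' * M := by
    rw [hJb, hJ, map_starL_mul, map_starL_OMod hO.1, map_starL_OMod hO'.1]
  have hCq : C * Submodule.span ℤ {((q : ℚ) : ℍ[ℚ,a,b])} = 1 := by
    rw [hC, span_singleton_coe_mul, inv_mul_cancel₀ hq0]
    rw [Submodule.one_eq_span]
    norm_num
  have h1J : (1 : ℍ[ℚ,a,b]) ∈ J := by
    have := Submodule.mul_mem_mul (show (1:ℍ[ℚ,a,b]) ∈ M from one_mem O)
      (show (1:ℍ[ℚ,a,b]) ∈ M' from one_mem O')
    simpa using this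
  have h1Jb : (1 : ℍ[ℚ,a,b]) ∈ Jb := by
    rw [hJb]
    exact ⟨1, h1J, star_one _⟩
  have hMJ : M * J = J := by rw [hJ, ← mul_assoc, OMod_mul_self]
  have hJM' : J * M' = J := by rw [hJ, mul_assoc, OMod_mul_self]
  have hM'Jb : M' * Jb = Jb := by rw [hJbeq, ← mul_assoc, OMod_mul_self]
  -- key identities
  have hJdJ : Jd * J = M' := by
    rw [hJd, mul_assoc, hf, ← mul_assoc, hCq, one_mul]
  have hJJd : J * Jd = M := by
    rw [hJd, ← mul_assoc, show J * C = C * J from central_comm q⁻¹ J, mul_assoc, hS,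
      ← mul_assoc, hCq, one_mul]
  have hM'Jd : M' * Jd ≤ Jd := by
    rw [hJd, ← mul_assoc, show M' * C = C * M' from central_comm q⁻¹ M', mul_assoc, hM'Jb]
  have hJdfg : Jd.FG :=
    (Submodule.fg_span_singleton _).mul
      (((OMod_fg hO.1).mul (OMod_fg hO'.1)).map _)
  have hJfg : J.FG := (OMod_fg hO.1).mul (OMod_fg hO'.1)
  have hqJd : ((q⁻¹ : ℚ) : ℍ[ℚ,a,b]) ∈ Jd := by
    have := Submodule.mul_mem_mul (Submodule.mem_span_singleton_self
      (((q⁻¹ : ℚ) : ℍ[ℚ,a,b]))) h1Jb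
    simpa using this
  -- the two maps
  have hf1 : ∀ I : {I : Submodule ℤ ℍ[ℚ,a,b] // IsLeftIdeal O I},
      IsLeftIdeal O' (Jd * I.1) := fun I =>
    mul_leftIdeal hJdfg hM'Jd ⟨q⁻¹, inv_ne_zero hq0, hqJd⟩ I.2.1 I.2.2.1
  have hf2 : ∀ K : {K : Submodule ℤ ℍ[ℚ,a,b] // IsLeftIdeal O' K},
      IsLeftIdeal O (J * K.1) := fun K =>
    mul_leftIdeal hJfg (le_of_eq hMJ) ⟨1, one_ne_zero, by simpa using h1J⟩ K.2.1 K.2.2.1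
  let f1 : {I : Submodule ℤ ℍ[ℚ,a,b] // IsLeftIdeal O I} →
      {K : Submodule ℤ ℍ[ℚ,a,b] // IsLeftIdeal O' K} := fun I => ⟨Jd * I.1, hf1 I⟩
  let f2 : {K : Submodule ℤ ℍ[ℚ,a,b] // IsLeftIdeal O' K} →
      {I : Submodule ℤ ℍ[ℚ,a,b] // IsLeftIdeal O I} := fun K => ⟨J * K.1, hf2 K⟩
  have hround1 : ∀ I, f2 (f1 I) = I := by
    intro I
    apply Subtype.ext
    show J * (Jd * I.1) = I.1
    rw [← mul_assoc, hJJd]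
    exact OMod_mul_leftIdeal I.2
  have hround2 : ∀ K, f1 (f2 K) = K := by
    intro K
    apply Subtype.ext
    show Jd * (J * K.1) = K.1
    rw [← mul_assoc, hJdJ]
    exact OMod_mul_leftIdeal K.2
  refine ⟨⟨Quot.map f1 (fun I I' h => equiv_transfer Jd h),
    Quot.map f2 (fun K K' h => equiv_transfer J h), ?_, ?_⟩⟩
  · intro x
    induction x using Quot.ind with
    | _ I => exact congrArg (Quot.mk _) (hround1 I)
  · intro x
    induction x using Quot.ind with
    | _ K => exact congrArg (Quot.mk _) (hround2 K)

end BrandtAux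


/-- **Brandt: the class number is an invariant of the algebra.** For any two maximal
orders `O`, `O'` of `A = ℍ[ℚ, a, b]`, the sets of equivalence classes of left
`O`-ideals and of left `O'`-ideals are in bijection; in particular all maximal orders
have the same class number `h(A)`. -/
theorem class_number_independent_of_maximal_order (a b : ℚ) (ha : a ≠ 0) (hb : b ≠ 0)
    (O O' : Subring ℍ[ℚ, a, b]) (hO : IsMaximalOrder O) (hO' : IsMaximalOrder O') :
    Nonempty
      ((Quot fun I J : {I : Submodule ℤ ℍ[ℚ, a, b] // IsLeftIdeal O I} =>
          IdealEquiv I.1 J.1) ≃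
        Quot fun I J : {I : Submodule ℤ ℍ[ℚ, a, b] // IsLeftIdeal O' I} =>
          IdealEquiv I.1 J.1) :=
  BrandtAux.main O O' hO hO'
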